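/- Let J > 0, β > 3, and let x_s ∈ (0,1/3) and x_l ∈ (1/3,1/2) satisfy ξ(x_s) = ξ(x_l) = β. If J > (β − 1/x_l)/(β + 1/x_l), then (x_s, x_s, x_s, x_s) is a local minimum of F_{β,J} and (x_l, x_l, x_l, x_l) is a critical point of F_{β,J} that is neither a local minimum nor a local maximum (a saddle point). -/

import Mathlib

open Real Set

/-- ξ(x) = (1/(1−3x)) log((1−2x)/x), continuously extended by ξ(1/3) = 3. -/
noncomputable def xi (x : ℝ) : ℝ :=
  if x = 1 / 3 then 3 else (1 / (1 - 3 * x)) * Real.log ((1 - 2 * x) / x)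

/-- The three-spin (q = 3) two-component Curie–Weiss–Potts free energy on coordinates
(x₁, x₂, y₁, y₂), with x₃ = 1 − x₁ − x₂ and y₃ = 1 − y₁ − y₂. -/
noncomputable def F3 (β J : ℝ) (x : Fin 4 → ℝ) : ℝ :=
  -(1 / 2) * ((x 0) ^ 2 + (x 1) ^ 2 + (1 - x 0 - x 1) ^ 2
      + (x 2) ^ 2 + (x 3) ^ 2 + (1 - x 2 - x 3) ^ 2)
    - J * (x 0 * x 2 + x 1 * x 3 + (1 - x 0 - x 1) * (1 - x 2 - x 3))
    + ((1 + J) / β) * (x 0 * Real.log (x 0) + x 1 * Real.log (x 1)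
        + (1 - x 0 - x 1) * Real.log (1 - x 0 - x 1)
        + x 2 * Real.log (x 2) + x 3 * Real.log (x 3)
        + (1 - x 2 - x 3) * Real.log (1 - x 2 - x 3))

/-! ### Auxiliary one-variable calculus lemmas -/

private lemma gibbs {z : ℝ} (hz : 0 < z) : z - 1 ≤ z * Real.log z := by
  have h := Real.one_sub_inv_le_log_of_pos hz
  have h2 := mul_le_mul_of_nonneg_left h hz.le
  have h3 : z * (1 - z⁻¹) = z - 1 := by field_simp
  linarith [h3 ▸ h2]

private lemma mul_log_hasDerivAt {u : ℝ} (hu : u ≠ 0) :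
    HasDerivAt (fun t : ℝ => t * Real.log t) (Real.log u + 1) u := by
  have h := (hasDerivAt_id u).mul (Real.hasDerivAt_log hu)
  refine h.congr_deriv ?_
  simp [hu]

private lemma fAux_hasDerivAt {z : ℝ} (hz : z ≠ 0) :
    HasDerivAt (fun z : ℝ => 2 * z ^ 2 * Real.log z - 3 * z ^ 2 + 4 * z - 1)
      (4 * (z * Real.log z - z + 1)) z := by
  have h1 : HasDerivAt (fun z : ℝ => 2 * z ^ 2) (2 * (2 * z)) z := by
    simpa [mul_comm] using (hasDerivAt_pow 2 z).const_mul (2 : ℝ)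
  have h2 := h1.mul (Real.hasDerivAt_log hz)
  have h3 : HasDerivAt (fun z : ℝ => 3 * z ^ 2) (3 * (2 * z)) z := by
    simpa [mul_comm] using (hasDerivAt_pow 2 z).const_mul (3 : ℝ)
  have h4 := ((h2.sub h3).add ((hasDerivAt_id z).const_mul (4 : ℝ))).sub_const (1 : ℝ)
  refine h4.congr_deriv ?_
  field_simp
  ring

private lemma fAux_mono :
    MonotoneOn (fun z : ℝ => 2 * z ^ 2 * Real.log z - 3 * z ^ 2 + 4 * z - 1) (Ioi 0) := by
  apply monotoneOn_of_deriv_nonneg (convex_Ioi 0)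
  · intro z hz
    exact (fAux_hasDerivAt (ne_of_gt hz)).differentiableAt.continuousAt.continuousWithinAt
  · intro z hz
    rw [interior_Ioi] at hz
    exact (fAux_hasDerivAt (ne_of_gt hz)).differentiableAt.differentiableWithinAt
  · intro z hz
    rw [interior_Ioi] at hz
    rw [(fAux_hasDerivAt (ne_of_gt (mem_Ioi.1 hz))).deriv]
    have := gibbs (mem_Ioi.1 hz)
    linarith

private lemma gAux_hasDerivAt {z : ℝ} (hz : z ≠ 0) :
    HasDerivAt (fun z : ℝ => z * Real.log z - z + 1 - (z - 1) ^ 2 / 2)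
      (Real.log z - (z - 1)) z := by
  have h1 := mul_log_hasDerivAt hz
  have h2 : HasDerivAt (fun z : ℝ => (z - 1) ^ 2 / 2) (z - 1) z := by
    have := (((hasDerivAt_id z).sub_const (1 : ℝ)).pow 2).div_const (2 : ℝ)
    refine this.congr_deriv ?_
    simp
  have h4 := (((h1.sub (hasDerivAt_id z)).add_const (1 : ℝ)).sub h2)
  refine h4.congr_deriv ?_
  ring

private lemma gAux_anti :
    AntitoneOn (fun z : ℝ => z * Real.log z - z + 1 - (z - 1) ^ 2 / 2) (Ioi 0) := by
  apply antitoneOn_of_deriv_nonpos (convex_Ioi 0)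
  · intro z hz
    exact (gAux_hasDerivAt (ne_of_gt hz)).differentiableAt.continuousAt.continuousWithinAt
  · intro z hz
    rw [interior_Ioi] at hz
    exact (gAux_hasDerivAt (ne_of_gt hz)).differentiableAt.differentiableWithinAt
  · intro z hz
    rw [interior_Ioi] at hz
    rw [(gAux_hasDerivAt (ne_of_gt (mem_Ioi.1 hz))).deriv]
    have := Real.log_le_sub_one_of_pos (mem_Ioi.1 hz)
    linarith

private lemma core1 {z : ℝ} (hz : 1 ≤ z) :
    (z - 1) ^ 2 ≤ (z * Real.log z - z + 1) * (2 * z) := by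
  have h0 : (0 : ℝ) < z := lt_of_lt_of_le one_pos hz
  have h := fAux_mono (mem_Ioi.2 one_pos) (mem_Ioi.2 h0) hz
  simp only [Real.log_one] at h
  nlinarith [h]

private lemma core2 {z : ℝ} (h0 : 0 < z) (hz : z ≤ 1) :
    (z * Real.log z - z + 1) * (2 * z) ≤ (z - 1) ^ 2 := by
  have h := fAux_mono (mem_Ioi.2 h0) (mem_Ioi.2 one_pos) hz
  simp only [Real.log_one] at h
  nlinarith [h]

private lemma core3 {z : ℝ} (hz : 1 ≤ z) :
    (z * Real.log z - z + 1) * 2 ≤ (z - 1) ^ 2 := by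
  have h0 : (0 : ℝ) < z := lt_of_lt_of_le one_pos hz
  have h := gAux_anti (mem_Ioi.2 one_pos) (mem_Ioi.2 h0) hz
  simp only [Real.log_one] at h
  nlinarith [h]

private lemma core4 {z : ℝ} (h0 : 0 < z) (hz : z ≤ 1) :
    (z - 1) ^ 2 ≤ (z * Real.log z - z + 1) * 2 := by
  have h := gAux_anti (mem_Ioi.2 h0) (mem_Ioi.2 one_pos) hz
  simp only [Real.log_one] at h
  nlinarith [h]

private lemma two_log_lt {s : ℝ} (hs : 1 < s) : 2 * Real.log s < s - s⁻¹ := by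
  have hd : ∀ z : ℝ, z ≠ 0 →
      HasDerivAt (fun z : ℝ => z - z⁻¹ - 2 * Real.log z) (1 - (-(z ^ 2)⁻¹) - 2 * z⁻¹) z :=
    fun z hz => ((hasDerivAt_id z).sub (hasDerivAt_inv hz)).sub
      ((Real.hasDerivAt_log hz).const_mul (2 : ℝ))
  have mono : StrictMonoOn (fun z : ℝ => z - z⁻¹ - 2 * Real.log z) (Ici 1) := by
    apply strictMonoOn_of_deriv_pos (convex_Ici 1)
    · intro z hz
      have hz0 : (0 : ℝ) < z := lt_of_lt_of_le one_pos hz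
      exact (hd z hz0.ne').differentiableAt.continuousAt.continuousWithinAt
    · intro z hz
      rw [interior_Ici] at hz
      have hz1 : (1 : ℝ) < z := hz
      have hz0 : (0 : ℝ) < z := lt_trans one_pos hz1
      rw [(hd z hz0.ne').deriv]
      have he : 1 - (-(z ^ 2)⁻¹) - 2 * z⁻¹ = (1 - z⁻¹) ^ 2 := by
        field_simp
        ring
      rw [he]
      have h2 : z⁻¹ < 1 := inv_lt_one_of_one_lt₀ hz1
      have h3 : 0 < 1 - z⁻¹ := by linarith
      exact pow_pos h3 2
  have h1 := mono (self_mem_Ici) (mem_Ici.2 hs.le) hs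
  simp only [Real.log_one, inv_one] at h1
  linarith

/-! ### The entropy remainder function and its quadratic bounds -/

/-- Second-order remainder of `t log t`. -/
noncomputable def Dent (t s : ℝ) : ℝ :=
  s * Real.log s - t * Real.log t - (Real.log t + 1) * (s - t)

private lemma Dent_self (t : ℝ) : Dent t t = 0 := by simp [Dent]

private lemma Dent_z {t s : ℝ} (ht : 0 < t) (hs : 0 < s) :
    Dent t s = t * ((s / t) * Real.log (s / t) - (s / t) + 1) := by
  have h : Real.log (s / t) = Real.log s - Real.log t := Real.log_div hs.ne' ht.ne'
  rw [Dent, h]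
  field_simp
  ring

private lemma Dent_nonneg {t s : ℝ} (ht : 0 < t) (hs : 0 < s) : 0 ≤ Dent t s := by
  rw [Dent_z ht hs]
  have hz : 0 < s / t := div_pos hs ht
  have := gibbs hz
  nlinarith

private lemma Dent_lower {t s m : ℝ} (ht : 0 < t) (hs : 0 < s) (hsm : s ≤ m) (htm : t ≤ m) :
    (s - t) ^ 2 ≤ Dent t s * (2 * m) := by
  have hz : 0 < s / t := div_pos hs ht
  set z := s / t with hzdef
  have hs_eq : t * z = s := by rw [hzdef]; field_simp
  have hE : 0 ≤ z * Real.log z - z + 1 := by have := gibbs hz; nlinarith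
  rw [Dent_z ht hs, ← hzdef]
  rcases le_total t s with hts | hst
  · have hz1 : (1 : ℝ) ≤ z := (one_le_div ht).2 hts
    have key := core1 hz1
    have h1 := mul_le_mul_of_nonneg_left key (sq_nonneg t)
    have h2 : 0 ≤ t * (z * Real.log z - z + 1) * (m - t * z) :=
      mul_nonneg (mul_nonneg ht.le hE) (by rw [hs_eq]; linarith)
    nlinarith [h1, h2, hs_eq]
  · have hz1 : z ≤ 1 := (div_le_one ht).2 hst
    have key := core4 hz hz1
    have h1 := mul_le_mul_of_nonneg_left key (sq_nonneg t)
    have h2 : 0 ≤ t * (z * Real.log z - z + 1) * (m - t) :=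
      mul_nonneg (mul_nonneg ht.le hE) (by linarith)
    nlinarith [h1, h2, hs_eq]

private lemma Dent_upper {t s m : ℝ} (ht : 0 < t) (hs : 0 < s) (hm : 0 < m)
    (hms : m ≤ s) (hmt : m ≤ t) :
    Dent t s * (2 * m) ≤ (s - t) ^ 2 := by
  have hz : 0 < s / t := div_pos hs ht
  set z := s / t with hzdef
  have hs_eq : t * z = s := by rw [hzdef]; field_simp
  have hE : 0 ≤ z * Real.log z - z + 1 := by have := gibbs hz; nlinarith
  rw [Dent_z ht hs, ← hzdef]
  rcases le_total t s with hts | hst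
  · have hz1 : (1 : ℝ) ≤ z := (one_le_div ht).2 hts
    have key := core3 hz1
    have h1 := mul_le_mul_of_nonneg_left key (mul_nonneg hm.le ht.le)
    have h2 : 0 ≤ (t - m) * t * (z - 1) ^ 2 :=
      mul_nonneg (mul_nonneg (by linarith) ht.le) (sq_nonneg _)
    nlinarith [h1, h2, hs_eq]
  · have hz1 : z ≤ 1 := (div_le_one ht).2 hst
    have key := core2 hz hz1
    have h1 := mul_le_mul_of_nonneg_left key (sq_nonneg t)
    have h2 : 0 ≤ 2 * t * (z * Real.log z - z + 1) * (t * z - m) :=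
      mul_nonneg (mul_nonneg (by linarith) hE) (by rw [hs_eq]; linarith)
    nlinarith [h1, h2, hs_eq]

private lemma scale_bound {c m D : ℝ} (hc : 0 ≤ c) (hm : 0 < m) {s : ℝ}
    (hb : s ^ 2 ≤ D * (2 * m)) : c / m / 2 * s ^ 2 ≤ c * D := by
  have h1 := mul_le_mul_of_nonneg_left hb (show (0:ℝ) ≤ c / m / 2 by positivity)
  have e : c / m / 2 * (D * (2 * m)) = c * D := by
    field_simp
  linarith [h1, e]

/-! ### Exact expansion of `F3` around a symmetric point -/

private lemma F3_expand (β J a : ℝ) (q : Fin 4 → ℝ) :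
    F3 β J q = F3 β J ![a, a, a, a]
      + ((1 + J) * (1 - 3 * a) + (1 + J) / β * (Real.log a - Real.log (1 - a - a)))
          * ((q 0 - a) + (q 1 - a) + (q 2 - a) + (q 3 - a))
      + (-(1 / 2) * ((q 0 - a) ^ 2 + (q 1 - a) ^ 2 + ((q 0 - a) + (q 1 - a)) ^ 2
            + (q 2 - a) ^ 2 + (q 3 - a) ^ 2 + ((q 2 - a) + (q 3 - a)) ^ 2)
         - J * ((q 0 - a) * (q 2 - a) + (q 1 - a) * (q 3 - a)
            + ((q 0 - a) + (q 1 - a)) * ((q 2 - a) + (q 3 - a))))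
      + (1 + J) / β * (Dent a (q 0) + Dent a (q 1) + Dent (1 - a - a) (1 - q 0 - q 1)
          + Dent a (q 2) + Dent a (q 3) + Dent (1 - a - a) (1 - q 2 - q 3)) := by
  have e0 : (![a, a, a, a] : Fin 4 → ℝ) 0 = a := rfl
  have e1 : (![a, a, a, a] : Fin 4 → ℝ) 1 = a := rfl
  have e2 : (![a, a, a, a] : Fin 4 → ℝ) 2 = a := rfl
  have e3 : (![a, a, a, a] : Fin 4 → ℝ) 3 = a := rfl
  simp only [F3, Dent, e0, e1, e2, e3]
  ring

/-! ### Positivity of the quadratic form -/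

private lemma quad_pos {J ka kb h0 h1 h2 h3 : ℝ} (hJ : 0 < J)
    (hka : 1 + J ≤ ka) (hkab : 3 * (1 + J) ≤ ka + 2 * kb) :
    0 ≤ -(1 / 2) * (h0 ^ 2 + h1 ^ 2 + (h0 + h1) ^ 2 + h2 ^ 2 + h3 ^ 2 + (h2 + h3) ^ 2)
        - J * (h0 * h2 + h1 * h3 + (h0 + h1) * (h2 + h3))
        + ka / 2 * (h0 ^ 2 + h1 ^ 2 + h2 ^ 2 + h3 ^ 2)
        + kb / 2 * ((h0 + h1) ^ 2 + (h2 + h3) ^ 2) := by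
  nlinarith [mul_nonneg (by linarith : (0:ℝ) ≤ ka + 2 * kb - 3 * (1 + J))
      (sq_nonneg (h0 + h1 + h2 + h3)),
    mul_nonneg (by linarith : (0:ℝ) ≤ ka - (1 + J)) (sq_nonneg (h0 - h1 + h2 - h3)),
    mul_nonneg (by linarith : (0:ℝ) ≤ ka + 2 * kb - 3 * (1 - J)) (sq_nonneg (h0 + h1 - h2 - h3)),
    mul_nonneg (by linarith : (0:ℝ) ≤ ka - (1 - J)) (sq_nonneg (h0 - h1 - h2 + h3))]

/-! ### Consequences of ξ(x) = β -/

private lemma xi_log {x β : ℝ} (hx0 : 0 < x) (hx13 : x ≠ 1 / 3)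
    (hξ : xi x = β) (h2x : 0 < 1 - 2 * x) :
    Real.log (1 - 2 * x) - Real.log x = β * (1 - 3 * x) := by
  rw [xi, if_neg hx13] at hξ
  have h3 : (1 : ℝ) - 3 * x ≠ 0 := by
    intro h
    apply hx13
    linarith
  rw [← Real.log_div h2x.ne' hx0.ne']
  field_simp at hξ
  rw [mul_comm β, ← hξ, mul_comm x 2]

private lemma fact1 {x β : ℝ} (hx0 : 0 < x) (hx3 : x < 1 / 3)
    (hlog : Real.log (1 - 2 * x) - Real.log x = β * (1 - 3 * x)) : β * x < 1 := by
  have h2x : (0 : ℝ) < 1 - 2 * x := by linarith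
  have hne : (1 - 2 * x) / x ≠ 1 := by
    intro h
    rw [div_eq_one_iff_eq hx0.ne'] at h
    linarith
  have h1 := Real.log_lt_sub_one_of_pos (div_pos h2x hx0) hne
  rw [Real.log_div h2x.ne' hx0.ne', hlog] at h1
  have h4 : ((1 - 2 * x) / x - 1) * x = 1 - 3 * x := by field_simp; ring
  have h3 := mul_lt_mul_of_pos_right h1 hx0
  rw [h4] at h3
  nlinarith [h3, hx3]

private lemma fact2 {x β : ℝ} (hx0 : 0 < x) (hx3 : x < 1 / 3) (hβ : 3 < β)
    (hlog : Real.log (1 - 2 * x) - Real.log x = β * (1 - 3 * x)) :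
    3 * β < 1 / x + 2 / (1 - 2 * x) := by
  have h2x : (0 : ℝ) < 1 - 2 * x := by linarith
  set y := (1 - 2 * x) / x with hy
  have hy1 : 1 < y := by
    rw [hy, lt_div_iff₀ hx0]
    linarith
  set σ := Real.sqrt y with hσ
  have hy0 : (0 : ℝ) ≤ y := by linarith
  have hσ1 : 1 < σ := by
    rw [hσ]
    have h := (Real.lt_sqrt (by norm_num : (0:ℝ) ≤ 1)).2 (by simpa using hy1)
    simpa using h
  have hσ0 : 0 < σ := lt_trans one_pos hσ1
  have hσ2 : σ ^ 2 = y := Real.sq_sqrt hy0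
  have key := two_log_lt hσ1
  have hlogy : Real.log y = 2 * Real.log σ := by
    rw [hσ, Real.log_sqrt hy0]; ring
  have hylog : Real.log y = β * (1 - 3 * x) := by
    rw [hy, Real.log_div h2x.ne' hx0.ne', hlog]
  have h5 : β * (1 - 3 * x) < σ - σ⁻¹ := by
    rw [← hylog, hlogy]
    exact key
  have hxy : x * y = 1 - 2 * x := by rw [hy]; field_simp
  have h6 : x * σ ^ 2 = 1 - 2 * x := by rw [hσ2]; exact hxy
  have h8 : β * (1 - 3 * x) * (x * σ) < 1 - 3 * x := by
    have hmul := mul_lt_mul_of_pos_right h5 (mul_pos hx0 hσ0)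
    have hrhs : (σ - σ⁻¹) * (x * σ) = x * σ ^ 2 - x := by
      field_simp
    rw [hrhs, h6] at hmul
    linarith [hmul]
  have h13 : (0 : ℝ) < 1 - 3 * x := by linarith
  have h7 : β * x * σ < 1 := by nlinarith [h8, h13]
  have hgoal_eq : 1 / x + 2 / (1 - 2 * x) = 1 / (x * (1 - 2 * x)) := by
    rw [div_add_div _ _ hx0.ne' h2x.ne']; congr 1; ring
  rw [hgoal_eq, lt_div_iff₀ (by positivity)]
  rcases le_or_gt (3 * (x * σ)) 1 with hc | hc
  · have hp1 : β * x * σ * (3 * (x * σ)) ≤ β * x * σ * 1 :=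
      mul_le_mul_of_nonneg_left hc (by positivity)
    have heq : 3 * β * (x * (1 - 2 * x)) = β * x * σ * (3 * (x * σ)) := by
      rw [← h6]; ring
    rw [heq]
    calc β * x * σ * (3 * (x * σ)) ≤ β * x * σ * 1 := hp1
      _ = β * x * σ := by ring
      _ < 1 := h7
  · exfalso
    have hgt := mul_pos (show (0:ℝ) < β - 3 by linarith) (mul_pos hx0 hσ0)
    nlinarith [h7, hc, hgt]

/-! ### The derivative of F3 -/

private noncomputable def pr (i : Fin 4) : (Fin 4 → ℝ) →L[ℝ] ℝ := ContinuousLinearMap.proj i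

private lemma F3_hasFDerivAt (β J : ℝ) (q : Fin 4 → ℝ) (h0 : 0 < q 0) (h1 : 0 < q 1)
    (hw1 : 0 < 1 - q 0 - q 1) (h2 : 0 < q 2) (h3 : 0 < q 3) (hw2 : 0 < 1 - q 2 - q 3) :
    HasFDerivAt (F3 β J)
      ((((1 - q 0 - q 1) - q 0 - J * (q 2 - (1 - q 2 - q 3))
          + (1 + J) / β * (Real.log (q 0) - Real.log (1 - q 0 - q 1))) • pr 0
        + ((1 - q 0 - q 1) - q 1 - J * (q 3 - (1 - q 2 - q 3))
          + (1 + J) / β * (Real.log (q 1) - Real.log (1 - q 0 - q 1))) • pr 1)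
        + (((1 - q 2 - q 3) - q 2 - J * (q 0 - (1 - q 0 - q 1))
          + (1 + J) / β * (Real.log (q 2) - Real.log (1 - q 2 - q 3))) • pr 2
        + ((1 - q 2 - q 3) - q 3 - J * (q 1 - (1 - q 0 - q 1))
          + (1 + J) / β * (Real.log (q 3) - Real.log (1 - q 2 - q 3))) • pr 3)) q := by
  have hp : ∀ i : Fin 4, HasFDerivAt (fun x : Fin 4 → ℝ => x i) (pr i) q :=
    fun i => (pr i).hasFDerivAt
  have ha1 : HasFDerivAt (fun x : Fin 4 → ℝ => 1 - x 0 - x 1) (0 - pr 0 - pr 1) q :=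
    ((hasFDerivAt_const (1 : ℝ) q).sub (hp 0)).sub (hp 1)
  have ha2 : HasFDerivAt (fun x : Fin 4 → ℝ => 1 - x 2 - x 3) (0 - pr 2 - pr 3) q :=
    ((hasFDerivAt_const (1 : ℝ) q).sub (hp 2)).sub (hp 3)
  have hsq : ∀ u : ℝ, HasDerivAt (fun t : ℝ => t ^ 2) (2 * u) u := fun u => by
    simpa using hasDerivAt_pow 2 u
  have e0 : HasFDerivAt (fun x : Fin 4 → ℝ => x 0 ^ 2) ((2 * q 0) • pr 0) q :=
    by have := (hsq (q 0)).comp_hasFDerivAt q (hp 0); exact this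
  have e1 : HasFDerivAt (fun x : Fin 4 → ℝ => x 1 ^ 2) ((2 * q 1) • pr 1) q :=
    by have := (hsq (q 1)).comp_hasFDerivAt q (hp 1); exact this
  have e2 : HasFDerivAt (fun x : Fin 4 → ℝ => x 2 ^ 2) ((2 * q 2) • pr 2) q :=
    by have := (hsq (q 2)).comp_hasFDerivAt q (hp 2); exact this
  have e3 : HasFDerivAt (fun x : Fin 4 → ℝ => x 3 ^ 2) ((2 * q 3) • pr 3) q :=
    by have := (hsq (q 3)).comp_hasFDerivAt q (hp 3); exact this
  have ew1 : HasFDerivAt (fun x : Fin 4 → ℝ => (1 - x 0 - x 1) ^ 2)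
      ((2 * (1 - q 0 - q 1)) • (0 - pr 0 - pr 1)) q :=
    by have := (hsq (1 - q 0 - q 1)).comp_hasFDerivAt q ha1; exact this
  have ew2 : HasFDerivAt (fun x : Fin 4 → ℝ => (1 - x 2 - x 3) ^ 2)
      ((2 * (1 - q 2 - q 3)) • (0 - pr 2 - pr 3)) q :=
    by have := (hsq (1 - q 2 - q 3)).comp_hasFDerivAt q ha2; exact this
  have m02 : HasFDerivAt (fun x : Fin 4 → ℝ => x 0 * x 2) (q 0 • pr 2 + q 2 • pr 0) q :=
    (hp 0).mul (hp 2)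
  have m13 : HasFDerivAt (fun x : Fin 4 → ℝ => x 1 * x 3) (q 1 • pr 3 + q 3 • pr 1) q :=
    (hp 1).mul (hp 3)
  have mw : HasFDerivAt (fun x : Fin 4 → ℝ => (1 - x 0 - x 1) * (1 - x 2 - x 3))
      ((1 - q 0 - q 1) • (0 - pr 2 - pr 3) + (1 - q 2 - q 3) • (0 - pr 0 - pr 1)) q :=
    ha1.mul ha2
  have l0 : HasFDerivAt (fun x : Fin 4 → ℝ => x 0 * Real.log (x 0))
      ((Real.log (q 0) + 1) • pr 0) q :=
    by have := (mul_log_hasDerivAt h0.ne').comp_hasFDerivAt q (hp 0); exact this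
  have l1 : HasFDerivAt (fun x : Fin 4 → ℝ => x 1 * Real.log (x 1))
      ((Real.log (q 1) + 1) • pr 1) q :=
    by have := (mul_log_hasDerivAt h1.ne').comp_hasFDerivAt q (hp 1); exact this
  have l2 : HasFDerivAt (fun x : Fin 4 → ℝ => x 2 * Real.log (x 2))
      ((Real.log (q 2) + 1) • pr 2) q :=
    by have := (mul_log_hasDerivAt h2.ne').comp_hasFDerivAt q (hp 2); exact this
  have l3 : HasFDerivAt (fun x : Fin 4 → ℝ => x 3 * Real.log (x 3))
      ((Real.log (q 3) + 1) • pr 3) q :=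
    by have := (mul_log_hasDerivAt h3.ne').comp_hasFDerivAt q (hp 3); exact this
  have lw1 : HasFDerivAt (fun x : Fin 4 → ℝ => (1 - x 0 - x 1) * Real.log (1 - x 0 - x 1))
      ((Real.log (1 - q 0 - q 1) + 1) • (0 - pr 0 - pr 1)) q :=
    by have := (mul_log_hasDerivAt hw1.ne').comp_hasFDerivAt q ha1; exact this
  have lw2 : HasFDerivAt (fun x : Fin 4 → ℝ => (1 - x 2 - x 3) * Real.log (1 - x 2 - x 3))
      ((Real.log (1 - q 2 - q 3) + 1) • (0 - pr 2 - pr 3)) q :=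
    by have := (mul_log_hasDerivAt hw2.ne').comp_hasFDerivAt q ha2; exact this
  have hbig := (((((((e0.add e1).add ew1).add e2).add e3).add ew2).const_mul
      (-(1/2 : ℝ))).sub (((m02.add m13).add mw).const_mul J)).add
      ((((((l0.add l1).add lw1).add l2).add l3).add lw2).const_mul ((1 + J) / β))
  refine hbig.congr_fderiv ?_
  · ext v
    simp only [pr, ContinuousLinearMap.add_apply, ContinuousLinearMap.coe_smul',
      ContinuousLinearMap.coe_sub', Pi.smul_apply, Pi.sub_apply, Pi.add_apply,
      ContinuousLinearMap.proj_apply, ContinuousLinearMap.zero_apply, smul_eq_mul,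
      ContinuousLinearMap.coe_add']
    ring

/-! ### The main theorem -/

set_option maxHeartbeats 4000000 in
/-- low-temperature regime: for β > 3, x_s ∈ (0,1/3), x_l ∈ (1/3,1/2)
with ξ(x_s) = ξ(x_l) = β and J > ψ₁(β) = (β − 1/x_l)/(β + 1/x_l), the point
(x_s,x_s,x_s,x_s) is a local minimum of F_{β,J} and (x_l,x_l,x_l,x_l) is a critical
point which is neither a local minimum nor a local maximum (a saddle point). -/
theorem stmt_15 (β J xs xl : ℝ) (hJ : 0 < J) (hβ : 3 < β)
    (hxs : xs ∈ Ioo (0 : ℝ) (1 / 3)) (hxl : xl ∈ Ioo (1 / 3 : ℝ) (1 / 2))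
    (hξs : xi xs = β) (hξl : xi xl = β)
    (hJψ : (β - 1 / xl) / (β + 1 / xl) < J) :
    IsLocalMin (F3 β J) ![xs, xs, xs, xs] ∧
    (fderiv ℝ (F3 β J) ![xl, xl, xl, xl] = 0 ∧
      ¬ IsLocalMin (F3 β J) ![xl, xl, xl, xl] ∧
      ¬ IsLocalMax (F3 β J) ![xl, xl, xl, xl]) := by
  obtain ⟨hxs0, hxs3⟩ := hxs
  obtain ⟨hxl3, hxl2⟩ := hxl
  have hβ0 : (0 : ℝ) < β := by linarith
  have hJ1 : (0 : ℝ) < 1 + J := by linarith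
  have hxl0 : (0 : ℝ) < xl := by linarith
  have hc0 : (0 : ℝ) < (1 + J) / β := by positivity
  have hcβ : (1 + J) / β * β = 1 + J := div_mul_cancel₀ _ hβ0.ne'
  have hlogs : Real.log (1 - 2 * xs) - Real.log xs = β * (1 - 3 * xs) :=
    xi_log hxs0 (ne_of_lt hxs3) hξs (by linarith)
  have hlogl : Real.log (1 - 2 * xl) - Real.log xl = β * (1 - 3 * xl) :=
    xi_log hxl0 (by intro h; rw [h] at hxl3; norm_num at hxl3) hξl (by linarith)
  have hlogsw : Real.log (1 - xs - xs) - Real.log xs = β * (1 - 3 * xs) := by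
    rw [show (1 : ℝ) - xs - xs = 1 - 2 * xs by ring]; exact hlogs
  have hloglw : Real.log (1 - xl - xl) - Real.log xl = β * (1 - 3 * xl) := by
    rw [show (1 : ℝ) - xl - xl = 1 - 2 * xl by ring]; exact hlogl
  have hKs : (1 + J) * (1 - 3 * xs)
      + (1 + J) / β * (Real.log xs - Real.log (1 - xs - xs)) = 0 := by
    linear_combination (-((1 + J) / β)) * hlogsw - (1 - 3 * xs) * hcβ
  have hKl : (1 + J) * (1 - 3 * xl)
      + (1 + J) / β * (Real.log xl - Real.log (1 - xl - xl)) = 0 := by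
    linear_combination (-((1 + J) / β)) * hloglw - (1 - 3 * xl) * hcβ
  have hβxs : β * xs < 1 := fact1 hxs0 hxs3 hlogs
  have hsum : 3 * β < 1 / xs + 2 / (1 - 2 * xs) := fact2 hxs0 hxs3 hβ hlogs
  have hβxl : 1 < β * xl := by nlinarith
  have hε0 : (0 : ℝ) < (J - 1) * xl + (1 + J) / β := by
    have hd : (0 : ℝ) < β + 1 / xl := by positivity
    rw [div_lt_iff₀ hd] at hJψ
    have h1 : (β - 1 / xl) * xl < J * (β + 1 / xl) * xl :=
      mul_lt_mul_of_pos_right hJψ hxl0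
    have e1 : (β - 1 / xl) * xl = β * xl - 1 := by field_simp
    have e2 : J * (β + 1 / xl) * xl = J * β * xl + J := by field_simp
    rw [e1, e2] at h1
    have e3 : (J - 1) * xl + (1 + J) / β = ((J - 1) * xl * β + (1 + J)) / β := by
      rw [eq_div_iff hβ0.ne']
      linear_combination hcβ
    rw [e3]
    apply div_pos _ hβ0
    nlinarith [h1]
  constructor
  · -- (xs,xs,xs,xs) is a local minimum
    have hW0 : (0 : ℝ) < 1 - xs - xs := by linarith
    have hsumW : 3 * β < 1 / xs + 2 / (1 - xs - xs) := by
      rw [show (1 : ℝ) - xs - xs = 1 - 2 * xs by ring]; exact hsum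
    have hM0 : 0 < 1 / xs + 2 / (1 - xs - xs) - 3 * β := by linarith
    have hA00 : 0 < 1 / xs ^ 2 + 4 / (1 - xs - xs) ^ 2 := by positivity
    have hβinv : xs < 1 / β := by rw [lt_div_iff₀ hβ0]; linarith
    obtain ⟨r, hrdef⟩ : ∃ r : ℝ, r = min (min (xs / 2) ((1 - xs - xs) / 4))
        (min (1 / β - xs) ((1 / xs + 2 / (1 - xs - xs) - 3 * β)
          / (1 / xs ^ 2 + 4 / (1 - xs - xs) ^ 2))) := ⟨_, rfl⟩
    have hr0 : 0 < r := by
      rw [hrdef]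
      exact lt_min (lt_min (by linarith) (by linarith))
        (lt_min (by linarith) (div_pos hM0 hA00))
    have hr1 : r ≤ xs / 2 := by
      rw [hrdef]; exact le_trans (min_le_left _ _) (min_le_left _ _)
    have hr2 : r ≤ (1 - xs - xs) / 4 := by
      rw [hrdef]; exact le_trans (min_le_left _ _) (min_le_right _ _)
    have hr3 : r ≤ 1 / β - xs := by
      rw [hrdef]; exact le_trans (min_le_right _ _) (min_le_left _ _)
    have hr4 : r ≤ (1 / xs + 2 / (1 - xs - xs) - 3 * β)
        / (1 / xs ^ 2 + 4 / (1 - xs - xs) ^ 2) := by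
      rw [hrdef]; exact le_trans (min_le_right _ _) (min_le_right _ _)
    have hrA : r * (1 / xs ^ 2 + 4 / (1 - xs - xs) ^ 2)
        ≤ 1 / xs + 2 / (1 - xs - xs) - 3 * β := by
      rw [le_div_iff₀ hA00] at hr4
      exact hr4
    have hxr : (0 : ℝ) < xs + r := by linarith
    have hWr : (0 : ℝ) < 1 - xs - xs + 2 * r := by linarith
    have hka : 1 + J ≤ (1 + J) / β / (xs + r) := by
      have h1 : β * (xs + r) ≤ 1 := by
        have h2 : xs + r ≤ 1 / β := by linarith
        calc β * (xs + r) ≤ β * (1 / β) := mul_le_mul_of_nonneg_left h2 hβ0.le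
          _ = 1 := by field_simp
      have h3 : (1 + J) * (β * (xs + r)) ≤ 1 + J := by nlinarith [h1]
      rw [div_div, le_div_iff₀ (by positivity)]
      linarith [h3]
    have hinv1 : 1 / xs - r / xs ^ 2 ≤ 1 / (xs + r) := by
      have e : 1 / (xs + r) - (1 / xs - r / xs ^ 2) = r ^ 2 / (xs ^ 2 * (xs + r)) := by
        field_simp
        ring
      have hpos : 0 ≤ r ^ 2 / (xs ^ 2 * (xs + r)) := by positivity
      linarith [e, hpos]
    have hinv2 : 2 / (1 - xs - xs) - 4 * r / (1 - xs - xs) ^ 2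
        ≤ 2 / (1 - xs - xs + 2 * r) := by
      have e : 2 / (1 - xs - xs + 2 * r) - (2 / (1 - xs - xs) - 4 * r / (1 - xs - xs) ^ 2)
          = 8 * r ^ 2 / ((1 - xs - xs) ^ 2 * (1 - xs - xs + 2 * r)) := by
        field_simp
        ring
      have hpos : 0 ≤ 8 * r ^ 2 / ((1 - xs - xs) ^ 2 * (1 - xs - xs + 2 * r)) := by positivity
      linarith [e, hpos]
    have hkab : 3 * (1 + J) ≤ (1 + J) / β / (xs + r)
        + 2 * ((1 + J) / β / (1 - xs - xs + 2 * r)) := by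
      have haux : 3 * β ≤ 1 / (xs + r) + 2 / (1 - xs - xs + 2 * r) := by
        have edist : r * (1 / xs ^ 2 + 4 / (1 - xs - xs) ^ 2)
            = r / xs ^ 2 + 4 * r / (1 - xs - xs) ^ 2 := by ring
        linarith [hinv1, hinv2, hrA, edist]
      have h := mul_le_mul_of_nonneg_left haux hc0.le
      have e3 : (1 + J) / β * (3 * β) = 3 * (1 + J) := by
        linear_combination 3 * hcβ
      have e4 : (1 + J) / β * (1 / (xs + r) + 2 / (1 - xs - xs + 2 * r))
          = (1 + J) / β / (xs + r) + 2 * ((1 + J) / β / (1 - xs - xs + 2 * r)) := by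
        ring
      rw [e3, e4] at h
      exact h
    refine Filter.eventually_of_mem (Metric.ball_mem_nhds _ hr0) ?_
    intro q hq
    have hdist := (dist_pi_lt_iff hr0).1 (Metric.mem_ball.1 hq)
    have hd0 : |q 0 - xs| < r := by
      have h := hdist 0
      rwa [show (![xs, xs, xs, xs] : Fin 4 → ℝ) 0 = xs from rfl, Real.dist_eq] at h
    have hd1 : |q 1 - xs| < r := by
      have h := hdist 1
      rwa [show (![xs, xs, xs, xs] : Fin 4 → ℝ) 1 = xs from rfl, Real.dist_eq] at h
    have hd2 : |q 2 - xs| < r := by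
      have h := hdist 2
      rwa [show (![xs, xs, xs, xs] : Fin 4 → ℝ) 2 = xs from rfl, Real.dist_eq] at h
    have hd3 : |q 3 - xs| < r := by
      have h := hdist 3
      rwa [show (![xs, xs, xs, xs] : Fin 4 → ℝ) 3 = xs from rfl, Real.dist_eq] at h
    obtain ⟨ha0, hb0⟩ := abs_lt.1 hd0
    obtain ⟨ha1, hb1⟩ := abs_lt.1 hd1
    obtain ⟨ha2, hb2⟩ := abs_lt.1 hd2
    obtain ⟨ha3, hb3⟩ := abs_lt.1 hd3
    have hq0 : 0 < q 0 := by linarith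
    have hq1 : 0 < q 1 := by linarith
    have hq2 : 0 < q 2 := by linarith
    have hq3 : 0 < q 3 := by linarith
    have hwq1 : 0 < 1 - q 0 - q 1 := by linarith
    have hwq2 : 0 < 1 - q 2 - q 3 := by linarith
    have b0 : (q 0 - xs) ^ 2 ≤ Dent xs (q 0) * (2 * (xs + r)) :=
      Dent_lower hxs0 hq0 (by linarith) (by linarith)
    have b1 : (q 1 - xs) ^ 2 ≤ Dent xs (q 1) * (2 * (xs + r)) :=
      Dent_lower hxs0 hq1 (by linarith) (by linarith)
    have b2 : (q 2 - xs) ^ 2 ≤ Dent xs (q 2) * (2 * (xs + r)) :=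
      Dent_lower hxs0 hq2 (by linarith) (by linarith)
    have b3 : (q 3 - xs) ^ 2 ≤ Dent xs (q 3) * (2 * (xs + r)) :=
      Dent_lower hxs0 hq3 (by linarith) (by linarith)
    have bw1 : ((1 - q 0 - q 1) - (1 - xs - xs)) ^ 2
        ≤ Dent (1 - xs - xs) (1 - q 0 - q 1) * (2 * (1 - xs - xs + 2 * r)) :=
      Dent_lower hW0 hwq1 (by linarith) (by linarith)
    have bw2 : ((1 - q 2 - q 3) - (1 - xs - xs)) ^ 2
        ≤ Dent (1 - xs - xs) (1 - q 2 - q 3) * (2 * (1 - xs - xs + 2 * r)) :=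
      Dent_lower hW0 hwq2 (by linarith) (by linarith)
    have cb0 := scale_bound hc0.le hxr b0
    have cb1 := scale_bound hc0.le hxr b1
    have cb2 := scale_bound hc0.le hxr b2
    have cb3 := scale_bound hc0.le hxr b3
    have cbw1 := scale_bound hc0.le hWr bw1
    have cbw2 := scale_bound hc0.le hWr bw2
    have esq1 : ((q 0 - xs) + (q 1 - xs)) ^ 2 = ((1 - q 0 - q 1) - (1 - xs - xs)) ^ 2 := by
      ring
    have esq2 : ((q 2 - xs) + (q 3 - xs)) ^ 2 = ((1 - q 2 - q 3) - (1 - xs - xs)) ^ 2 := by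
      ring
    have qp := quad_pos (J := J) (ka := (1 + J) / β / (xs + r))
      (kb := (1 + J) / β / (1 - xs - xs + 2 * r))
      (h0 := q 0 - xs) (h1 := q 1 - xs) (h2 := q 2 - xs) (h3 := q 3 - xs) hJ hka hkab
    rw [F3_expand β J xs q, hKs]
    linarith [qp, cb0, cb1, cb2, cb3, cbw1, cbw2, esq1, esq2]
  refine ⟨?_, ?_, ?_⟩
  · -- the gradient vanishes at (xl,xl,xl,xl)
    have hq0 : (0 : ℝ) < (![xl, xl, xl, xl] : Fin 4 → ℝ) 0 := hxl0
    have hq1 : (0 : ℝ) < (![xl, xl, xl, xl] : Fin 4 → ℝ) 1 := hxl0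
    have hq2 : (0 : ℝ) < (![xl, xl, xl, xl] : Fin 4 → ℝ) 2 := hxl0
    have hq3 : (0 : ℝ) < (![xl, xl, xl, xl] : Fin 4 → ℝ) 3 := hxl0
    have hw1 : (0 : ℝ) < 1 - (![xl, xl, xl, xl] : Fin 4 → ℝ) 0
        - (![xl, xl, xl, xl] : Fin 4 → ℝ) 1 := by
      show (0 : ℝ) < 1 - xl - xl
      linarith
    have hw2 : (0 : ℝ) < 1 - (![xl, xl, xl, xl] : Fin 4 → ℝ) 2
        - (![xl, xl, xl, xl] : Fin 4 → ℝ) 3 := by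
      show (0 : ℝ) < 1 - xl - xl
      linarith
    have hfd := F3_hasFDerivAt β J ![xl, xl, xl, xl] hq0 hq1 hw1 hq2 hq3 hw2
    simp only [show (![xl, xl, xl, xl] : Fin 4 → ℝ) 0 = xl from rfl,
      show (![xl, xl, xl, xl] : Fin 4 → ℝ) 1 = xl from rfl,
      show (![xl, xl, xl, xl] : Fin 4 → ℝ) 2 = xl from rfl,
      show (![xl, xl, xl, xl] : Fin 4 → ℝ) 3 = xl from rfl] at hfd
    have hg : 1 - xl - xl - xl - J * (xl - (1 - xl - xl))
        + (1 + J) / β * (Real.log xl - Real.log (1 - xl - xl)) = 0 := by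
      linear_combination (-((1 + J) / β)) * hloglw - (1 - 3 * xl) * hcβ
    rw [hg] at hfd
    simp only [zero_smul, add_zero, zero_add] at hfd
    exact hfd.fderiv
  · -- not a local minimum : direction (1,-1,1,-1)
    intro hmin
    set g : ℝ → (Fin 4 → ℝ) := fun s => ![xl + s, xl - s, xl + s, xl - s] with hg
    have hgc : ContinuousAt g 0 := by
      apply Continuous.continuousAt
      apply continuous_pi
      intro i
      fin_cases i
      · exact continuous_const.add continuous_id
      · exact continuous_const.sub continuous_id
      · exact continuous_const.add continuous_id
      · exact continuous_const.sub continuous_id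
    have hg0 : g 0 = ![xl, xl, xl, xl] := by
      rw [hg]
      funext i
      fin_cases i <;> norm_num
    have hmin' : IsLocalMin (F3 β J ∘ g) 0 := by
      apply IsLocalMin.comp_continuous _ hgc
      rw [hg0]
      exact hmin
    obtain ⟨ε, hε, hball⟩ := Metric.eventually_nhds_iff.1 hmin'
    have hβil : 1 / β < xl := by rw [div_lt_iff₀ hβ0]; nlinarith [hβxl]
    set r1 : ℝ := min (xl / 2) ((xl - 1 / β) / 2) with hr1def
    have hr10 : 0 < r1 := by
      rw [hr1def]
      exact lt_min (by linarith) (by linarith)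
    set t : ℝ := min (ε / 2) r1 with htdef
    have ht0 : 0 < t := by
      rw [htdef]
      exact lt_min (by linarith) hr10
    have htr : t ≤ r1 := min_le_right _ _
    have htε : dist t (0 : ℝ) < ε := by
      rw [Real.dist_eq, sub_zero, abs_of_pos ht0]
      calc t ≤ ε / 2 := min_le_left _ _
        _ < ε := by linarith
    have hle := hball htε
    have hA : (0 : ℝ) < xl - r1 := by
      have h := min_le_left (xl / 2) ((xl - 1 / β) / 2)
      rw [← hr1def] at h
      linarith
    have hAβ : 1 / β < xl - r1 := by
      have h := min_le_right (xl / 2) ((xl - 1 / β) / 2)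
      rw [← hr1def] at h
      linarith
    have hxt1 : 0 < xl + t := by linarith
    have hxt2 : 0 < xl - t := by
      have h := min_le_left (xl / 2) ((xl - 1 / β) / 2)
      rw [← hr1def] at h
      linarith [htr]
    have bu1 : Dent xl (xl + t) * (2 * (xl - r1)) ≤ (xl + t - xl) ^ 2 :=
      Dent_upper hxl0 hxt1 hA (by linarith) (by linarith)
    have bu2 : Dent xl (xl - t) * (2 * (xl - r1)) ≤ (xl - t - xl) ^ 2 :=
      Dent_upper hxl0 hxt2 hA (by linarith) (by linarith)
    have hD1 : 0 ≤ Dent xl (xl + t) := Dent_nonneg hxl0 hxt1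
    have hD2 : 0 ≤ Dent xl (xl - t) := Dent_nonneg hxl0 hxt2
    have hAS : (xl - r1) * (Dent xl (xl + t) + Dent xl (xl - t)) ≤ t ^ 2 := by
      nlinarith [bu1, bu2]
    have hu3 : β⁻¹ < xl - r1 := by rw [← one_div]; linarith
    have hfinal : (1 + J) / β * (2 * (Dent xl (xl + t) + Dent xl (xl - t)))
        < 2 * (1 + J) * t ^ 2 := by
      have hS : 0 ≤ Dent xl (xl + t) + Dent xl (xl - t) := by linarith
      rcases eq_or_lt_of_le hS with h | h
      · rw [← h]
        simp
        positivity
      · have h4 : β⁻¹ * (Dent xl (xl + t) + Dent xl (xl - t))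
            < (xl - r1) * (Dent xl (xl + t) + Dent xl (xl - t)) :=
          mul_lt_mul_of_pos_right hu3 h
        have h5 : β⁻¹ * (Dent xl (xl + t) + Dent xl (xl - t)) < t ^ 2 := lt_of_lt_of_le h4 hAS
        have h6 := mul_lt_mul_of_pos_left h5 (show (0:ℝ) < 2 * (1 + J) by linarith)
        have e : (1 + J) / β * (2 * (Dent xl (xl + t) + Dent xl (xl - t)))
            = 2 * (1 + J) * (β⁻¹ * (Dent xl (xl + t) + Dent xl (xl - t))) := by ring
        rw [e]
        exact h6
    have hstrict : F3 β J (g t) < F3 β J ![xl, xl, xl, xl] := by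
      have hexp := F3_expand β J xl (g t)
      rw [show g t 0 = xl + t from rfl, show g t 1 = xl - t from rfl,
        show g t 2 = xl + t from rfl, show g t 3 = xl - t from rfl] at hexp
      rw [show (1 : ℝ) - (xl + t) - (xl - t) = 1 - xl - xl by ring] at hexp
      rw [Dent_self] at hexp
      rw [hKl] at hexp
      rw [hexp]
      linarith [hfinal]
    have hle' : F3 β J ![xl, xl, xl, xl] ≤ F3 β J (g t) := by
      have h := hle
      simp only [Function.comp_apply, hg0] at h
      exact h
    linarith [hstrict, hle']
  · -- not a local maximum : direction (1,-1,-1,1)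
    intro hmax
    set g : ℝ → (Fin 4 → ℝ) := fun s => ![xl + s, xl - s, xl - s, xl + s] with hg
    have hgc : ContinuousAt g 0 := by
      apply Continuous.continuousAt
      apply continuous_pi
      intro i
      fin_cases i
      · exact continuous_const.add continuous_id
      · exact continuous_const.sub continuous_id
      · exact continuous_const.sub continuous_id
      · exact continuous_const.add continuous_id
    have hg0 : g 0 = ![xl, xl, xl, xl] := by
      rw [hg]
      funext i
      fin_cases i <;> norm_num
    have hmax' : IsLocalMax (F3 β J ∘ g) 0 := by
      apply IsLocalMax.comp_continuous _ hgc
      rw [hg0]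
      exact hmax
    obtain ⟨ε, hε, hball⟩ := Metric.eventually_nhds_iff.1 hmax'
    set r2 : ℝ := min (xl / 2) (((J - 1) * xl + (1 + J) / β) / (2 * (1 + J))) with hr2def
    have hr20 : 0 < r2 := by
      rw [hr2def]
      exact lt_min (by linarith) (div_pos hε0 (by linarith))
    set t : ℝ := min (ε / 2) r2 with htdef
    have ht0 : 0 < t := by
      rw [htdef]
      exact lt_min (by linarith) hr20
    have htr : t ≤ r2 := min_le_right _ _
    have htε : dist t (0 : ℝ) < ε := by
      rw [Real.dist_eq, sub_zero, abs_of_pos ht0]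
      calc t ≤ ε / 2 := min_le_left _ _
        _ < ε := by linarith
    have hle := hball htε
    have hB0 : (0 : ℝ) < xl + r2 := by linarith
    have hxt1 : 0 < xl + t := by linarith
    have hxt2 : 0 < xl - t := by
      have h := min_le_left (xl / 2) (((J - 1) * xl + (1 + J) / β) / (2 * (1 + J)))
      rw [← hr2def] at h
      linarith [htr]
    have bl1 : (xl + t - xl) ^ 2 ≤ Dent xl (xl + t) * (2 * (xl + r2)) :=
      Dent_lower hxl0 hxt1 (by linarith) (by linarith)
    have bl2 : (xl - t - xl) ^ 2 ≤ Dent xl (xl - t) * (2 * (xl + r2)) :=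
      Dent_lower hxl0 hxt2 (by linarith) (by linarith)
    have hBS : t ^ 2 ≤ (xl + r2) * (Dent xl (xl + t) + Dent xl (xl - t)) := by
      nlinarith [bl1, bl2]
    have hmarg : 0 < (J - 1) * (xl + r2) + (1 + J) / β := by
      have hr2b : r2 ≤ ((J - 1) * xl + (1 + J) / β) / (2 * (1 + J)) := by
        rw [hr2def]; exact min_le_right _ _
      rw [le_div_iff₀ (show (0:ℝ) < 2 * (1 + J) by linarith)] at hr2b
      have hJr2 : 0 ≤ J * r2 := mul_nonneg hJ.le hr20.le
      nlinarith [hr2b, hε0, hJr2]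
    have h5 : 0 < (xl + r2) * ((J - 1) * t ^ 2
        + (1 + J) / β * (Dent xl (xl + t) + Dent xl (xl - t))) := by
      have ht2 : (0:ℝ) < t ^ 2 := by positivity
      nlinarith [mul_pos hmarg ht2, mul_nonneg hc0.le (sub_nonneg.2 hBS)]
    have hfinal2 : 0 < (J - 1) * t ^ 2
        + (1 + J) / β * (Dent xl (xl + t) + Dent xl (xl - t)) := by
      by_contra hcon
      push_neg at hcon
      nlinarith [h5, hcon, hB0]
    have hstrict : F3 β J ![xl, xl, xl, xl] < F3 β J (g t) := by
      have hexp := F3_expand β J xl (g t)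
      rw [show g t 0 = xl + t from rfl, show g t 1 = xl - t from rfl,
        show g t 2 = xl - t from rfl, show g t 3 = xl + t from rfl] at hexp
      rw [show (1 : ℝ) - (xl + t) - (xl - t) = 1 - xl - xl by ring] at hexp
      rw [show (1 : ℝ) - (xl - t) - (xl + t) = 1 - xl - xl by ring] at hexp
      rw [Dent_self] at hexp
      rw [hKl] at hexp
      rw [hexp]
      linarith [hfinal2]
    have hle' : F3 β J (g t) ≤ F3 β J ![xl, xl, xl, xl] := by
      have h := hle
      simp only [Function.comp_apply, hg0] at h
      exact h
    linarith [hstrict, hle']
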